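/- Let α ∈ (0,1) and let u₂(x₁,x₂) := cos(x₁) sin(x₂) ((1−α) sin(x₁) + sin(x₂)) / (sin(x₁) + sin(x₂))^{1+α} (the vertical component of the velocity field ∇⊥ψ̃_α). Then there exists δ₀ > 0 such that for every δ ∈ (0, δ₀] and every x = (x₁, x₂) ∈ S_δ one has u₂(x) ≥ (1 − 4δ) x₂^{1−α}. -/

import Mathlib

open Set Real

noncomputable section

/-- The plane with the Euclidean norm. -/
abbrev E2 := EuclideanSpace ℝ (Fin 2)

/-- The vertical component `u₂ = ∂_{x₁} ψ̃_α` of the velocity field `∇⊥ψ̃_α`, where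
`ψ̃_α(x₁,x₂) = sin x₁ sin x₂ / (sin x₁ + sin x₂)^α`. -/
def u2 (α : ℝ) (x : E2) : ℝ :=
  Real.cos (x 0) * Real.sin (x 1) *
    ((1 - α) * Real.sin (x 0) + Real.sin (x 1)) /
      (Real.sin (x 0) + Real.sin (x 1)) ^ (1 + α)

/-- The region `S_δ = A_δ ∩ {x₁ ≤ δ x₂}`, where `A_δ = B_δ(0) ∩ (0,π)²`. -/
def Sδ (δ : ℝ) : Set E2 :=
  (Metric.ball (0 : E2) δ ∩ {x | x 0 ∈ Ioo 0 π ∧ x 1 ∈ Ioo 0 π}) ∩ {x | x 0 ≤ δ * x 1}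

lemma coord_le_norm (x : E2) (i : Fin 2) : |x i| ≤ ‖x‖ := by
  rw [EuclideanSpace.norm_eq]
  have : |x i| = Real.sqrt (|x i| ^ 2) := by
    rw [Real.sqrt_sq (abs_nonneg _)]
  rw [this]
  apply Real.sqrt_le_sqrt
  exact Finset.single_le_sum (f := fun j => |x j| ^ 2)
    (fun j _ => sq_nonneg _) (Finset.mem_univ i)

set_option maxHeartbeats 1000000 in
theorem u2_lower_bound (α : ℝ) (hα : α ∈ Ioo (0:ℝ) 1) :
    ∃ δ₀ : ℝ, 0 < δ₀ ∧ ∀ δ ∈ Ioc (0:ℝ) δ₀, ∀ x ∈ Sδ δ,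
      (1 - 4 * δ) * (x 1) ^ ((1:ℝ) - α) ≤ u2 α x := by
  obtain ⟨hα0, hα1⟩ := hα
  refine ⟨1/2, by norm_num, fun δ hδ x hx => ?_⟩
  obtain ⟨hδ0, hδh⟩ := hδ
  obtain ⟨⟨hball, ⟨ha0, haπ⟩, hb0, hbπ⟩, hle⟩ := hx
  set a := x 0 with ha_def
  set b := x 1 with hb_def
  have hδ1 : δ ≤ 1 := hδh.trans (by norm_num)
  have hb_lt : b < δ := by
    have := coord_le_norm x 1
    rw [← hb_def] at this
    have hn : ‖x‖ < δ := by
      simpa [dist_zero_right] using (Metric.mem_ball.mp hball)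
    calc b ≤ |b| := le_abs_self b
    _ ≤ ‖x‖ := this
    _ < δ := hn
  have ha_le : a ≤ δ * b := hle
  have ha_lt : a < δ := lt_of_le_of_lt ha_le (by nlinarith)
  set s1 := Real.sin a with hs1_def
  set s2 := Real.sin b with hs2_def
  have hs1 : 0 < s1 := Real.sin_pos_of_pos_of_lt_pi ha0 haπ
  have hs2 : 0 < s2 := Real.sin_pos_of_pos_of_lt_pi hb0 hbπ
  have hca : 1 - δ ^ 2 / 2 ≤ Real.cos a := by
    have h1 : 1 - a ^ 2 / 2 ≤ Real.cos a := Real.one_sub_sq_div_two_le_cos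
    nlinarith [sq_nonneg a, sq_nonneg δ]
  have hs2b : b * (1 - δ ^ 2 / 4) ≤ s2 := by
    have h1 : b - b ^ 3 / 4 < s2 := by
      have h0 := Real.sin_gt_sub_cube hb0
      rw [← hs2_def] at h0
      linarith [pow_pos hb0 3]
    have hbsq : b ^ 2 ≤ δ ^ 2 := by nlinarith
    have hb3 : b ^ 3 ≤ δ ^ 2 * b := by
      calc b ^ 3 = b ^ 2 * b := by ring
      _ ≤ δ ^ 2 * b := mul_le_mul_of_nonneg_right hbsq hb0.le
    nlinarith
  have hsum_pos : 0 < s1 + s2 := by linarith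
  have hsum : s1 + s2 ≤ (1 + δ) * b := by
    have h1 : s1 ≤ a := Real.sin_le ha0.le
    have h2 : s2 ≤ b := Real.sin_le hb0.le
    nlinarith
  set D := (s1 + s2) ^ (1 + α) with hD_def
  have hD : 0 < D := Real.rpow_pos_of_pos hsum_pos _
  have hDle : D ≤ (1 + 3 * δ) * b ^ (1 + α) := by
    have h1 : D ≤ ((1 + δ) * b) ^ (1 + α) :=
      Real.rpow_le_rpow hsum_pos.le hsum (by linarith)
    have h2 : ((1 + δ) * b) ^ (1 + α) = (1 + δ) ^ (1 + α) * b ^ (1 + α) :=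
      Real.mul_rpow (by linarith) hb0.le
    have h3 : (1 + δ) ^ (1 + α) ≤ (1 + δ) ^ (2 : ℝ) :=
      Real.rpow_le_rpow_of_exponent_le (by linarith) (by linarith)
    have h4 : (1 + δ) ^ (2 : ℝ) = (1 + δ) ^ (2 : ℕ) := by
      rw [← Real.rpow_natCast]; norm_num
    have h5 : ((1 + δ) : ℝ) ^ (2 : ℕ) ≤ 1 + 3 * δ := by nlinarith
    have hbpow : (0:ℝ) ≤ b ^ (1 + α) := (Real.rpow_pos_of_pos hb0 _).le
    calc D ≤ (1 + δ) ^ (1 + α) * b ^ (1 + α) := h2 ▸ h1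
    _ ≤ (1 + 3 * δ) * b ^ (1 + α) := by
        apply mul_le_mul_of_nonneg_right _ hbpow
        calc (1 + δ) ^ (1 + α) ≤ (1 + δ) ^ (2 : ℝ) := h3
        _ ≤ 1 + 3 * δ := by rw [h4]; exact h5
  set N := Real.cos a * s2 * ((1 - α) * s1 + s2) with hN_def
  have hca0 : 0 < Real.cos a := lt_of_lt_of_le (by nlinarith) hca
  have hN0 : 0 ≤ N := by
    apply mul_nonneg (mul_nonneg hca0.le hs2.le)
    nlinarith
  have hNge : (1 - δ ^ 2) * b ^ 2 ≤ N := by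
    have h1 : Real.cos a * s2 * s2 ≤ N := by
      have : 0 ≤ (1 - α) * s1 := by nlinarith
      nlinarith [mul_pos hca0 hs2]
    have h2 : (1 - δ ^ 2) * b ^ 2 ≤ Real.cos a * s2 * s2 := by
      have hb14 : (0:ℝ) ≤ 1 - δ ^ 2 / 4 := by nlinarith
      have hprod : 0 ≤ b * (1 - δ ^ 2 / 4) := mul_nonneg hb0.le hb14
      have hsq : (b * (1 - δ ^ 2 / 4)) ^ 2 ≤ s2 ^ 2 := by
        exact pow_le_pow_left₀ hprod hs2b 2
      have hmul : (1 - δ ^ 2 / 2) * (b * (1 - δ ^ 2 / 4)) ^ 2 ≤ Real.cos a * s2 ^ 2 :=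
        mul_le_mul hca hsq (sq_nonneg _) hca0.le
      have hkey : (1 - δ ^ 2) ≤ (1 - δ ^ 2 / 2) * (1 - δ ^ 2 / 4) ^ 2 := by
        nlinarith [sq_nonneg (δ ^ 2), sq_nonneg δ]
      have hkey2 : (1 - δ ^ 2) * b ^ 2 ≤ (1 - δ ^ 2 / 2) * (1 - δ ^ 2 / 4) ^ 2 * b ^ 2 :=
        mul_le_mul_of_nonneg_right hkey (sq_nonneg b)
      calc (1 - δ ^ 2) * b ^ 2 ≤ (1 - δ ^ 2 / 2) * (1 - δ ^ 2 / 4) ^ 2 * b ^ 2 := hkey2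
      _ = (1 - δ ^ 2 / 2) * (b * (1 - δ ^ 2 / 4)) ^ 2 := by ring
      _ ≤ Real.cos a * s2 ^ 2 := hmul
      _ = Real.cos a * s2 * s2 := by ring
    linarith
  have hu2 : u2 α x = N / D := rfl
  rw [hu2]
  have hbpow1 : 0 < b ^ ((1:ℝ) - α) := Real.rpow_pos_of_pos hb0 _
  rcases le_or_gt (1 - 4 * δ) 0 with h4 | h4
  · calc (1 - 4 * δ) * b ^ ((1:ℝ) - α) ≤ 0 := mul_nonpos_of_nonpos_of_nonneg h4 hbpow1.le
    _ ≤ N / D := div_nonneg hN0 hD.le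
  · rw [le_div_iff₀ hD]
    have hpowmul : b ^ ((1:ℝ) - α) * b ^ (1 + α) = b ^ 2 := by
      rw [← Real.rpow_add hb0]
      norm_num
    calc (1 - 4 * δ) * b ^ ((1:ℝ) - α) * D
        ≤ (1 - 4 * δ) * b ^ ((1:ℝ) - α) * ((1 + 3 * δ) * b ^ (1 + α)) := by
          apply mul_le_mul_of_nonneg_left hDle
          positivity
    _ = (1 - 4 * δ) * (1 + 3 * δ) * (b ^ ((1:ℝ) - α) * b ^ (1 + α)) := by ring
    _ = (1 - 4 * δ) * (1 + 3 * δ) * b ^ 2 := by rw [hpowmul]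
    _ ≤ (1 - δ ^ 2) * b ^ 2 := by
        have : (1 - 4 * δ) * (1 + 3 * δ) ≤ 1 - δ ^ 2 := by nlinarith
        exact mul_le_mul_of_nonneg_right this (sq_nonneg b)
    _ ≤ N := hNge

end
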